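/- For a₀ > 0, the function v(t) = 36·a₀·t/(3 + √(6t²+9))² solves the singular initial value problem dv/dt = (v/t)·(2√3/√(2t²+3) - 1) with v(0) = 0 and v'(0) = a₀, and attains its global maximum on (0,∞) at t = 3√2/2 with value (2√2/3)·a₀. -/

import Mathlib

noncomputable def vComp (a₀ t : ℝ) : ℝ := 36 * a₀ * t / (3 + Real.sqrt (6 * t ^ 2 + 9)) ^ 2

/-- For `a₀ > 0`, the function `v(t) = 36a₀t/(3+√(6t²+9))²` solves the singular IVP
`dv/dt = (v/t)(2√3/√(2t²+3) - 1)` with `v(0) = 0`, `v'(0) = a₀`, and attains its global maximum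
on `(0,∞)` at `t = 3√2/2` with value `(2√2/3)·a₀`. -/
theorem vComp_solves_and_max (a₀ : ℝ) (ha₀ : 0 < a₀) :
    vComp a₀ 0 = 0 ∧
    HasDerivAt (vComp a₀) a₀ 0 ∧
    (∀ t > (0 : ℝ),
      HasDerivAt (vComp a₀)
        (vComp a₀ t / t * (2 * Real.sqrt 3 / Real.sqrt (2 * t ^ 2 + 3) - 1)) t) ∧
    vComp a₀ (3 * Real.sqrt 2 / 2) = 2 * Real.sqrt 2 / 3 * a₀ ∧
    ∀ t > (0 : ℝ), vComp a₀ t ≤ vComp a₀ (3 * Real.sqrt 2 / 2) := by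
  have hpos : ∀ t : ℝ, (0:ℝ) < 6 * t ^ 2 + 9 := fun t => by positivity
  have hSpos : ∀ t : ℝ, 0 < Real.sqrt (6 * t ^ 2 + 9) := fun t => Real.sqrt_pos.2 (hpos t)
  have hSsq : ∀ t : ℝ, (Real.sqrt (6 * t ^ 2 + 9)) ^ 2 = 6 * t ^ 2 + 9 :=
    fun t => Real.sq_sqrt (hpos t).le
  have hder : ∀ t : ℝ, HasDerivAt (vComp a₀)
      ((36 * a₀ * (3 + Real.sqrt (6 * t ^ 2 + 9)) ^ 2 -
        36 * a₀ * t * (2 * (3 + Real.sqrt (6 * t ^ 2 + 9)) ^ 1 *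
          (12 * t / (2 * Real.sqrt (6 * t ^ 2 + 9))))) /
        ((3 + Real.sqrt (6 * t ^ 2 + 9)) ^ 2) ^ 2) t := by
    intro t
    have h1 : HasDerivAt (fun t : ℝ => 6 * t ^ 2 + 9) (12 * t) t := by
      have := ((hasDerivAt_pow 2 t).const_mul 6).add_const 9
      simpa using this.congr_deriv (by ring)
    have h2 : HasDerivAt (fun t : ℝ => Real.sqrt (6 * t ^ 2 + 9))
        (12 * t / (2 * Real.sqrt (6 * t ^ 2 + 9))) t := h1.sqrt (hpos t).ne'
    have h3 : HasDerivAt (fun t : ℝ => (3 + Real.sqrt (6 * t ^ 2 + 9)) ^ 2)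
        (2 * (3 + Real.sqrt (6 * t ^ 2 + 9)) ^ 1 *
          (12 * t / (2 * Real.sqrt (6 * t ^ 2 + 9)))) t := by
      have := (h2.const_add 3).pow 2
      simpa [Pi.pow_def] using this
    have h4 : HasDerivAt (fun t : ℝ => 36 * a₀ * t) (36 * a₀) t := by
      simpa using (hasDerivAt_id t).const_mul (36 * a₀)
    have hden : (3 + Real.sqrt (6 * t ^ 2 + 9)) ^ 2 ≠ 0 := by positivity
    exact h4.div h3 hden
  have h9 : Real.sqrt 9 = 3 := by
    rw [show (9:ℝ) = 3 ^ 2 by norm_num, Real.sqrt_sq (by norm_num)]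
  have hr2 : Real.sqrt 2 ^ 2 = 2 := Real.sq_sqrt (by norm_num)
  have hr2pos : (0:ℝ) < Real.sqrt 2 := Real.sqrt_pos.2 (by norm_num)
  have htm : Real.sqrt (6 * (3 * Real.sqrt 2 / 2) ^ 2 + 9) = 6 := by
    rw [show 6 * (3 * Real.sqrt 2 / 2) ^ 2 + 9 = (36:ℝ) by
      linear_combination (27/2) * hr2]
    rw [show (36:ℝ) = 6 ^ 2 by norm_num, Real.sqrt_sq (by norm_num)]
  have hval : vComp a₀ (3 * Real.sqrt 2 / 2) = 2 * Real.sqrt 2 / 3 * a₀ := by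
    unfold vComp
    rw [htm]; ring
  refine ⟨?_, ?_, ?_, hval, ?_⟩
  · simp [vComp]
  · have := hder 0
    convert this using 1
    rw [show 6 * (0:ℝ) ^ 2 + 9 = 9 by norm_num, h9]
    norm_num
    ring
  · intro t ht
    have := hder t
    convert this using 1
    have hspos : 0 < Real.sqrt (6 * t ^ 2 + 9) := hSpos t
    have hssq : (Real.sqrt (6 * t ^ 2 + 9)) ^ 2 = 6 * t ^ 2 + 9 := hSsq t
    have hq3 : Real.sqrt 3 ^ 2 = 3 := Real.sq_sqrt (by norm_num)
    have hq3pos : (0:ℝ) < Real.sqrt 3 := Real.sqrt_pos.2 (by norm_num)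
    have hwpos : (0:ℝ) < Real.sqrt (2 * t ^ 2 + 3) := Real.sqrt_pos.2 (by positivity)
    have hsw : Real.sqrt (6 * t ^ 2 + 9) = Real.sqrt 3 * Real.sqrt (2 * t ^ 2 + 3) := by
      rw [show 6 * t ^ 2 + 9 = 3 * (2 * t ^ 2 + 3) by ring,
        Real.sqrt_mul (by norm_num)]
    have hfrac : 2 * Real.sqrt 3 / Real.sqrt (2 * t ^ 2 + 3) =
        6 / Real.sqrt (6 * t ^ 2 + 9) := by
      rw [hsw]
      field_simp
      linear_combination 2 * hq3
    rw [hfrac]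
    unfold vComp
    set s := Real.sqrt (6 * t ^ 2 + 9) with hs
    have h3s : (0:ℝ) < 3 + s := by linarith
    field_simp
    linear_combination (-2) * hssq
  · intro t ht
    rw [hval]
    unfold vComp
    set s := Real.sqrt (6 * t ^ 2 + 9) with hs
    have hspos : 0 < s := hSpos t
    have hssq : s ^ 2 = 6 * t ^ 2 + 9 := hSsq t
    have h3s : (0:ℝ) < (3 + s) ^ 2 := by positivity
    rw [div_le_iff₀ h3s]
    set r := Real.sqrt 2 with hrdef
    have key : 54 * t ≤ r * (3 + s) ^ 2 := by
      have hc : (9 * r / 2) * t - 3 - t ^ 2 ≤ s := by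
        rcases le_or_gt t (13/2) with hle | hgt
        · rcases le_or_gt ((9 * r / 2) * t - 3 - t ^ 2) 0 with hc0 | hc0
          · linarith
          · have ht6r : t ≤ 6 * r := by nlinarith [hr2, hr2pos]
            have hsq : ((9 * r / 2) * t - 3 - t ^ 2) ^ 2 ≤ s ^ 2 := by
              rw [hssq]
              nlinarith [mul_nonneg (mul_nonneg ht.le (sq_nonneg (t - 3 * r / 2)))
                (by linarith : (0:ℝ) ≤ 6 * r - t), hr2]
            nlinarith [hspos, hc0]
        · have : (9 * r / 2) * t - 3 - t ^ 2 ≤ 0 := by nlinarith [hr2, hr2pos]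
          linarith
      have h1 := mul_le_mul_of_nonneg_left hc (by positivity : (0:ℝ) ≤ 6 * r)
      have e : r ^ 2 * t = 2 * t := by rw [hr2]
      have e2 : r * (3 + s) ^ 2 = 18 * r + 6 * r * t ^ 2 + 6 * r * s := by
        linear_combination r * hssq
      nlinarith [h1, e, e2]
    have hmul := mul_le_mul_of_nonneg_left key ha₀.le
    nlinarith [hmul]
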